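/- Let I = [a,b], M₀ < M₁, G₀, G₁ continuous kernels on I × I with G₁(t,s) = G₀(t,s) + (M₀−M₁)∫ₐᵇ G₀(t,r)G₁(r,s) dr. Fix (t,s) ∈ (a,b)². Suppose G₁(·,s) ≥ 0 on I, G₁(r,s) > 0 for all r in (s,b] outside a finite set, G₁(r,s) = 0 for r ∈ [a,s), and G₀(t,·) ≥ 0 on I with G₀(t,r) = 0 for r ∈ (t,b] and G₀(t,r) > 0 for r ∈ [a,t) outside a finite set. If t > s then G₁(t,s) < G₀(t,s), while if t < s then G₁(t,s) = G₀(t,s) = 0. -/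

import Mathlib

theorem stmt_18 (a b M₀ M₁ : ℝ) (hab : a < b) (hM : M₀ < M₁) (G₀ G₁ : ℝ → ℝ → ℝ)
    (hG₀ : ContinuousOn (fun q : ℝ × ℝ => G₀ q.1 q.2) (Set.Icc a b ×ˢ Set.Icc a b))
    (hG₁ : ContinuousOn (fun q : ℝ × ℝ => G₁ q.1 q.2) (Set.Icc a b ×ˢ Set.Icc a b))
    (hres : ∀ t' ∈ Set.Icc a b, ∀ s' ∈ Set.Icc a b,
      G₁ t' s' = G₀ t' s' + (M₀ - M₁) * ∫ r in a..b, G₀ t' r * G₁ r s')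
    (t s : ℝ) (ht : t ∈ Set.Ioo a b) (hs : s ∈ Set.Ioo a b)
    (hG₁nonneg : ∀ r ∈ Set.Icc a b, 0 ≤ G₁ r s)
    (F₁ : Set ℝ) (hF₁ : F₁.Finite)
    (hG₁posafter : ∀ r ∈ Set.Ioc s b, r ∉ F₁ → 0 < G₁ r s)
    (hG₁zerobefore : ∀ r ∈ Set.Ico a s, G₁ r s = 0)
    (hG₀nonneg : ∀ r ∈ Set.Icc a b, 0 ≤ G₀ t r)
    (hG₀zeroafter : ∀ r ∈ Set.Ioc t b, G₀ t r = 0)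
    (F₀ : Set ℝ) (hF₀ : F₀.Finite)
    (hG₀posbefore : ∀ r ∈ Set.Ico a t, r ∉ F₀ → 0 < G₀ t r) :
    (s < t → G₁ t s < G₀ t s) ∧
    (t < s → G₁ t s = 0 ∧ G₀ t s = 0) := by
  have htI : t ∈ Set.Icc a b := ⟨ht.1.le, ht.2.le⟩
  have hsI : s ∈ Set.Icc a b := ⟨hs.1.le, hs.2.le⟩
  set f : ℝ → ℝ := fun r => G₀ t r * G₁ r s with hf
  have hcont : ContinuousOn f (Set.Icc a b) := by
    apply ContinuousOn.mul
    · exact hG₀.comp (continuousOn_const.prodMk continuousOn_id) (fun r hr => show (t, r) ∈ _ from ⟨htI, hr⟩)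
    · exact hG₁.comp (continuousOn_id.prodMk continuousOn_const) (fun r hr => show (r, s) ∈ _ from ⟨hr, hsI⟩)
  have hfnonneg : ∀ r ∈ Set.Icc a b, 0 ≤ f r := fun r hr =>
    mul_nonneg (hG₀nonneg r hr) (hG₁nonneg r hr)
  have hcont' : ContinuousOn f (Set.uIcc a b) := by
    rwa [Set.uIcc_of_le hab.le]
  have hInt : IntervalIntegrable f MeasureTheory.volume a b := hcont'.intervalIntegrable
  constructor
  · intro hst
    -- pick r₀ ∈ Ioo s t outside F₀ ∪ F₁
    obtain ⟨r₀, hr₀I, hr₀F⟩ :=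
      ((Set.Ioo_infinite hst).diff (hF₀.union hF₁)).nonempty
    have hr₀ab : r₀ ∈ Set.Ioo a b := ⟨hs.1.trans hr₀I.1, hr₀I.2.trans ht.2⟩
    have hfr₀ : 0 < f r₀ := by
      have h0 : 0 < G₀ t r₀ := hG₀posbefore r₀ ⟨hr₀ab.1.le, hr₀I.2⟩
        (fun h => hr₀F (Or.inl h))
      have h1 : 0 < G₁ r₀ s := hG₁posafter r₀ ⟨hr₀I.1, hr₀ab.2.le⟩
        (fun h => hr₀F (Or.inr h))
      exact mul_pos h0 h1
    have hca : ContinuousAt f r₀ :=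
      hcont.continuousAt (Icc_mem_nhds hr₀ab.1 hr₀ab.2)
    have hev : ∀ᶠ x in nhds r₀, 0 < f x := continuousAt_const.eventually_lt hca hfr₀
    obtain ⟨ε, hε, hball⟩ := Metric.eventually_nhds_iff_ball.mp hev
    set u : ℝ := max s (r₀ - ε) with hu
    set v : ℝ := min t (r₀ + ε) with hv
    have huv : u < v := by
      have h1 := hr₀I.1; have h2 := hr₀I.2
      rw [hu, hv, lt_min_iff, max_lt_iff, max_lt_iff]
      refine ⟨⟨h1.trans h2, by linarith⟩, ⟨by linarith, by linarith⟩⟩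
    have hau : a ≤ u := hs.1.le.trans (le_max_left _ _)
    have hvb : v ≤ b := (min_le_left _ _).trans ht.2.le
    have hsub : ∀ x ∈ Set.Ioo u v, 0 < f x := by
      intro x hx
      apply hball
      rw [Real.ball_eq_Ioo]
      exact ⟨lt_of_le_of_lt (le_max_right _ _) hx.1, hx.2.trans_le (min_le_right _ _)⟩
    have hmem : ∀ x, a ≤ x → x ≤ b → x ∈ Set.uIcc a b := fun x h1 h2 =>
      Set.mem_uIcc.mpr (Or.inl ⟨h1, h2⟩)
    have hub : u ≤ b := huv.le.trans hvb
    have hav : a ≤ v := hau.trans huv.le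
    have hI1 : IntervalIntegrable f MeasureTheory.volume a u :=
      hInt.mono_set (Set.uIcc_subset_uIcc (hmem a le_rfl hab.le) (hmem u hau hub))
    have hI2 : IntervalIntegrable f MeasureTheory.volume u v :=
      hInt.mono_set (Set.uIcc_subset_uIcc (hmem u hau hub) (hmem v hav hvb))
    have hI3 : IntervalIntegrable f MeasureTheory.volume v b :=
      hInt.mono_set (Set.uIcc_subset_uIcc (hmem v hav hvb) (hmem b hab.le le_rfl))
    have hpos2 : 0 < ∫ r in u..v, f r :=
      intervalIntegral.intervalIntegral_pos_of_pos_on hI2 hsub huv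
    have hnn1 : 0 ≤ ∫ r in a..u, f r :=
      intervalIntegral.integral_nonneg hau
        (fun x hx => hfnonneg x ⟨hx.1, hx.2.trans hub⟩)
    have hnn3 : 0 ≤ ∫ r in v..b, f r :=
      intervalIntegral.integral_nonneg hvb
        (fun x hx => hfnonneg x ⟨hav.trans hx.1, hx.2⟩)
    have hsplit : (∫ r in a..b, f r) = (∫ r in a..u, f r) + (∫ r in u..v, f r) + (∫ r in v..b, f r) := by
      rw [intervalIntegral.integral_add_adjacent_intervals hI1 hI2,
        intervalIntegral.integral_add_adjacent_intervals (hI1.trans hI2) hI3]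
    have hIpos : 0 < ∫ r in a..b, f r := by rw [hsplit]; positivity
    have := hres t htI s hsI
    have hneg : (M₀ - M₁) * ∫ r in a..b, f r < 0 :=
      mul_neg_of_neg_of_pos (by linarith) hIpos
    rw [this]
    linarith [hneg]
  · intro hts
    have h1 : G₁ t s = 0 := hG₁zerobefore t ⟨ht.1.le, hts⟩
    have h0 : G₀ t s = 0 := hG₀zeroafter s ⟨hts, hs.2.le⟩
    exact ⟨h1, h0⟩
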